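/- Let n ≥ 2 be an integer and a > 0 a real number, and for 1 ≤ j ≤ n - 1 set α_j = sin(2jπ/n)/(1 - cos(2jπ/n)). Then for every v ∈ ℂ, |(v - a)^n - v^n|² = n²·a²·∏_{j=1}^{n-1} ( (Re v - a/2)² + (Im v - (a/2)·α_j)² ). -/

import Mathlib

open Real Complex

/-- Factorization of `|(v-a)^n - v^n|²` through the roots `v_j = (a/2)(1 + i α_j)`:
`|(v-a)^n - v^n|² = n² a² ∏_{j=1}^{n-1} ((Re v - a/2)² + (Im v - (a/2)α_j)²)`. -/
theorem stmt_16 (n : ℕ) (hn : 2 ≤ n) (a : ℝ) (ha : 0 < a) (v : ℂ) :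
    (‖(v - (a : ℝ)) ^ n - v ^ n‖) ^ 2 =
      (n : ℝ) ^ 2 * a ^ 2 * ∏ j ∈ Finset.Icc 1 (n - 1),
        ((v.re - a / 2) ^ 2 + (v.im - (a / 2) * (Real.sin (2 * j * Real.pi / n) /
          (1 - Real.cos (2 * j * Real.pi / n)))) ^ 2) := by
  have hn0 : n ≠ 0 := by omega
  haveI : NeZero n := ⟨hn0⟩
  have hnpos : 0 < n := by omega
  set ζ : ℂ := Complex.exp (2 * π * Complex.I / n) with hζdef
  have hζ : IsPrimitiveRoot ζ n := Complex.isPrimitiveRoot_exp n hn0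
  have hinj : Set.InjOn (ζ ^ ·) (Finset.range n) := fun i hi j hj h =>
    hζ.pow_inj (Finset.mem_range.1 hi) (Finset.mem_range.1 hj) h
  have himg : Polynomial.nthRootsFinset n (1 : ℂ) = (Finset.range n).image (ζ ^ ·) := by
    ext x
    simp only [Polynomial.mem_nthRootsFinset hnpos, Finset.mem_image, Finset.mem_range]
    constructor
    · intro hx
      obtain ⟨i, hi, rfl⟩ := hζ.eq_pow_of_pow_eq_one hx
      exact ⟨i, hi, rfl⟩
    · rintro ⟨i, hi, rfl⟩
      rw [← pow_mul, mul_comm, pow_mul, hζ.pow_eq_one, one_pow]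
  -- the product of (1 - ζ^j) over 1 ≤ j < n is n
  have hpoly : (Polynomial.X ^ n - 1 : Polynomial ℂ) =
      ∏ j ∈ Finset.range n, (Polynomial.X - Polynomial.C (ζ ^ j)) := by
    rw [Polynomial.X_pow_sub_one_eq_prod hnpos hζ, himg,
      Finset.prod_image (fun i hi j hj h => hinj hi hj h)]
  have hrange : Finset.range n = insert 0 (Finset.Ico 1 n) := by
    ext i; simp [Finset.mem_range, Finset.mem_Ico]; omega
  have hgeom : (∑ i ∈ Finset.range n, (Polynomial.X : Polynomial ℂ) ^ i) =
      ∏ j ∈ Finset.Ico 1 n, (Polynomial.X - Polynomial.C (ζ ^ j)) := by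
    have hX1 : (Polynomial.X - Polynomial.C (1:ℂ) : Polynomial ℂ) ≠ 0 := Polynomial.X_sub_C_ne_zero 1
    apply mul_left_cancel₀ hX1
    calc (Polynomial.X - Polynomial.C (1:ℂ)) * ∑ i ∈ Finset.range n, (Polynomial.X : Polynomial ℂ) ^ i
        = Polynomial.X ^ n - 1 := by
          rw [Polynomial.C_1, mul_comm, geom_sum_mul]
      _ = (Polynomial.X - Polynomial.C (ζ ^ 0)) *
            ∏ j ∈ Finset.Ico 1 n, (Polynomial.X - Polynomial.C (ζ ^ j)) := by
          rw [hpoly, hrange, Finset.prod_insert (by simp)]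
      _ = _ := by simp
  have hEprod : ∏ j ∈ Finset.Ico 1 n, ((1:ℂ) - ζ ^ j) = (n : ℂ) := by
    have := congrArg (Polynomial.eval 1) hgeom
    simpa [Polynomial.eval_prod, Polynomial.eval_finset_sum] using this.symm
  -- roots and per-factor identities
  set A : ℕ → ℝ := fun j => Real.sin (2 * j * Real.pi / n) / (1 - Real.cos (2 * j * Real.pi / n))
    with hA
  set w : ℕ → ℂ := fun j => ((a / 2 : ℝ) : ℂ) + ((a / 2 * A j : ℝ) : ℂ) * Complex.I with hwdef
  have hζj : ∀ j : ℕ, ζ ^ j =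
      ((Real.cos (2 * j * Real.pi / n) : ℝ) : ℂ) +
        ((Real.sin (2 * j * Real.pi / n) : ℝ) : ℂ) * Complex.I := by
    intro j
    rw [hζdef, ← Complex.exp_nat_mul]
    have h1 : (j : ℂ) * (2 * ↑π * Complex.I / ↑n) =
        ((2 * j * Real.pi / n : ℝ) : ℂ) * Complex.I := by
      push_cast
      field_simp
    rw [h1, Complex.exp_mul_I, Complex.ofReal_cos, Complex.ofReal_sin]
  have hcosne : ∀ j ∈ Finset.Ico 1 n, Real.cos (2 * j * Real.pi / n) ≠ 1 := by
    intro j hj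
    obtain ⟨hj1, hj2⟩ := Finset.mem_Ico.1 hj
    have hθpos : 0 < 2 * j * Real.pi / n := by
      have : (0:ℝ) < j := by exact_mod_cast hj1
      positivity
    have hθlt : 2 * j * Real.pi / n < 2 * Real.pi := by
      rw [div_lt_iff₀ (by positivity)]
      have hjn : (j : ℝ) < n := by exact_mod_cast hj2
      nlinarith [Real.pi_pos]
    intro h
    have := (Real.cos_eq_one_iff_of_lt_of_lt (by linarith) hθlt).1 h
    linarith
  have hwa : ∀ j ∈ Finset.Ico 1 n, (1 - ζ ^ j) * w j = (a : ℂ) := by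
    intro j hj
    have hc : 1 - Real.cos (2 * j * Real.pi / n) ≠ 0 :=
      sub_ne_zero.2 (Ne.symm (hcosne j hj))
    rw [hζj j, hwdef]
    simp only [hA]
    apply Complex.ext <;>
      simp only [Complex.mul_re, Complex.mul_im, Complex.sub_re, Complex.sub_im,
        Complex.add_re, Complex.add_im, Complex.one_re, Complex.one_im, Complex.I_re,
        Complex.I_im, Complex.ofReal_re, Complex.ofReal_im] <;>
      field_simp <;>
      nlinarith [Real.sin_sq_add_cos_sq (2 * j * Real.pi / n)]
  have hfacj : ∀ j ∈ Finset.Ico 1 n, (v - (a:ℂ)) - ζ ^ j * v = (1 - ζ ^ j) * (v - w j) := by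
    intro j hj
    linear_combination hwa j hj
  have hfact : (v - (a:ℂ)) ^ n - v ^ n =
      (-(a:ℂ)) * ∏ j ∈ Finset.Ico 1 n, ((1 - ζ ^ j) * (v - w j)) := by
    rw [IsPrimitiveRoot.pow_sub_pow_eq_prod_sub_mul (v - (a:ℂ)) v hnpos hζ, himg,
      Finset.prod_image (fun i hi j hj h => hinj hi hj h), hrange,
      Finset.prod_insert (by simp)]
    rw [Finset.prod_congr rfl hfacj]
    congr 1
    simp
  have habsj : ∀ j ∈ Finset.Ico 1 n, ‖v - w j‖ ^ 2 =
      (v.re - a / 2) ^ 2 + (v.im - a / 2 * A j) ^ 2 := by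
    intro j _
    rw [Complex.sq_norm, Complex.normSq_apply]
    simp [hwdef]
    ring
  -- assemble
  have hIcc : Finset.Icc 1 (n - 1) = Finset.Ico 1 n := by
    rw [← Finset.Ico_add_one_right_eq_Icc]
    congr 1
    omega
  rw [hIcc, hfact, norm_mul, norm_prod]
  simp only [norm_mul]
  rw [Finset.prod_mul_distrib, mul_pow, mul_pow]
  have h1 : ‖-(a:ℂ)‖ ^ 2 = a ^ 2 := by
    simp [abs_of_pos ha]
  have h2 : (∏ j ∈ Finset.Ico 1 n, ‖1 - ζ ^ j‖) ^ 2 = (n : ℝ) ^ 2 := by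
    rw [← norm_prod, hEprod]
    simp
  rw [h1, h2, ← Finset.prod_pow, Finset.prod_congr rfl habsj]
  simp only [hA]
  ring
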